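/- There is a universal constant C > 0 such that the following holds. Let μ be an arbitrary probability measure on {0,1}^n, let R be a set, let f : {0,1}^n → R, let b ∈ R, let ε ∈ (0,1/2], and let k be an integer with k ≥ C·(1/ε)·log(2/ε). Suppose that at least one of the following two conditions holds, where x and y denote independent samples from μ: (Condition I) Pr_x[ Pr_y[ f(x ∨ y) = b ] ≥ 1 − ε ] > ε/2; (Condition II) Pr_x[ Pr_y[ f(x ∨ y) = b ] ≥ ε ] ≥ 1 − ε/2. Then Pr_{S∼μ^(k)}[ I_S^b(f) > 1 − ε ] > 1 − ε. -/

import Mathlib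

set_option maxHeartbeats 1000000

open MeasureTheory
open scoped ENNReal

/-- Influence of coalition `S` towards value `b`. -/
noncomputable def infl {ι : Type*} {α : Type*} (μ : Measure (ι → Bool))
    (f : (ι → Bool) → α) (S : Finset ι) (b : α) : ℝ :=
  (μ {x | ∃ y, (∀ j ∉ S, y j = x j) ∧ f y = b}).toReal

/-- The boosted measure `μ^(t)`: the distribution of `x¹ ∨ ⋯ ∨ xᵗ` for i.i.d. `xⁱ ∼ μ`. -/
noncomputable def boost {n : ℕ} (μ : Measure (Fin n → Bool)) (t : ℕ) :
    Measure (Fin n → Bool) :=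
  (Measure.pi fun _ : Fin t => μ).map (fun xs i => Finset.univ.sup fun j => xs j i)

/-- The support of `x ∈ {0,1}^n` viewed as a subset of `[n]`. -/
def supp {n : ℕ} (x : Fin n → Bool) : Finset (Fin n) :=
  Finset.univ.filter fun i => x i = true

/-- Coordinatewise OR. -/
def orv {n : ℕ} (x y : Fin n → Bool) : Fin n → Bool := fun i => x i || y i

namespace KeyAux

open Finset

abbrev Pt (n : ℕ) := Fin n → Bool

lemma measAll {α : Type*} [MeasurableSpace α] [MeasurableSingletonClass α] [Finite α]
    (s : Set α) : MeasurableSet s := s.toFinite.measurableSet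

variable {n : ℕ} {R : Type}

/-- the map producing the boosted point -/
noncomputable def Phi {n k : ℕ} (xs : Fin k → Pt n) : Pt n :=
  fun i => Finset.univ.sup fun j => xs j i

lemma phi_false {k : ℕ} (xs : Fin k → Pt n) (j : Fin n) (h : Phi xs j = false)
    (l : Fin k) : xs l j = false :=
  (Finset.sup_eq_bot_iff (fun l : Fin k => xs l j) Finset.univ).1 h l (mem_univ l)

lemma not_mem_supp {x : Pt n} {j : Fin n} (h : j ∉ supp x) : x j = false := by
  simp [supp] at h
  exact h

/-- Witness set for `x`: points `z` such that `x ∨ z` hits `b`. -/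
def Wset (f : Pt n → R) (b : R) (x : Pt n) : Set (Pt n) := {z | f (orv x z) = b}

/-- The target set of the influence. -/
def Dset (f : Pt n → R) (b : R) (S : Finset (Fin n)) : Set (Pt n) :=
  {z | ∃ y, (∀ j ∉ S, y j = z j) ∧ f y = b}

lemma infl_eq (μ : Measure (Pt n)) (f : Pt n → R) (b : R) (S : Finset (Fin n)) :
    infl μ f S b = (μ (Dset f b S)).toReal := rfl

lemma wset_subset_dset {k : ℕ} (f : Pt n → R) (b : R) (xs : Fin k → Pt n) (i : Fin k) :
    Wset f b (xs i) ⊆ Dset f b (supp (Phi xs)) := by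
  intro z hz
  refine ⟨orv (xs i) z, fun j hj => ?_, hz⟩
  have h0 : xs i j = false := phi_false xs j (not_mem_supp hj) i
  simp [orv, h0]

lemma single_mem_dset {k : ℕ} (f : Pt n → R) (b : R) (xs : Fin k → Pt n) (i j j' : Fin k)
    (hj : xs j ∈ Wset f b (xs i)) : xs j' ∈ Dset f b (supp (Phi xs)) := by
  refine ⟨orv (xs i) (xs j), fun l hl => ?_, hj⟩
  have h0 := phi_false xs l (not_mem_supp hl)
  simp [orv, h0 i, h0 j, h0 j']

lemma sum_sing (μ : Measure (Pt n)) (T : Finset (Pt n)) :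
    ∑ x ∈ T, μ {x} = μ ↑T := by
  rw [show (↑T : Set (Pt n)) = ⋃ x ∈ T, {x} by ext z; simp]
  rw [measure_biUnion_finset ?_ fun _ _ => measAll _]
  intro a _ c _ hac
  exact Set.disjoint_singleton.2 hac

lemma sum_sing_le_one (μ : Measure (Pt n)) [IsProbabilityMeasure μ] (T : Finset (Pt n)) :
    ∑ x ∈ T, μ {x} ≤ 1 := by
  rw [sum_sing]; exact prob_le_one

lemma pi_box (μ : Measure (Pt n)) [IsProbabilityMeasure μ] {k : ℕ} (C : Fin k → Set (Pt n)) :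
    (Measure.pi fun _ : Fin k => μ) {xs | ∀ i, xs i ∈ C i} = ∏ i, μ (C i) := by
  rw [show {xs : Fin k → Pt n | ∀ i, xs i ∈ C i} = Set.univ.pi C by ext xs; simp [Set.mem_pi]]
  exact Measure.pi_pi _ _

lemma box1 (μ : Measure (Pt n)) [IsProbabilityMeasure μ] {k : ℕ} (m : Finset (Fin k))
    (B : Set (Pt n)) :
    (Measure.pi fun _ : Fin k => μ) {xs | ∀ i ∈ m, xs i ∈ B} = μ B ^ m.card := by
  classical
  have hset : {xs : Fin k → Pt n | ∀ i ∈ m, xs i ∈ B}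
      = {xs | ∀ i, xs i ∈ (if i ∈ m then B else Set.univ)} := by
    ext xs
    simp only [Set.mem_setOf_eq]
    refine ⟨fun h i => ?_, fun h i hi => ?_⟩
    · split_ifs with hi
      · exact h i hi
      · exact Set.mem_univ _
    · have := h i; rwa [if_pos hi] at this
  rw [hset, pi_box]
  have : ∀ i : Fin k, μ (if i ∈ m then B else Set.univ) = (if i ∈ m then μ B else 1) := by
    intro i; split_ifs
    · rfl
    · exact measure_univ
  rw [Finset.prod_congr rfl fun i _ => this i, Finset.prod_ite_mem, Finset.univ_inter,
    Finset.prod_const]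

lemma box2 (μ : Measure (Pt n)) [IsProbabilityMeasure μ] {k : ℕ} (m : Finset (Fin k))
    {i : Fin k} (hi : i ∉ m) (x : Pt n) (B : Set (Pt n)) :
    (Measure.pi fun _ : Fin k => μ) {xs | xs i = x ∧ ∀ j ∈ m, xs j ∈ B}
      = μ {x} * μ B ^ m.card := by
  classical
  have hset : {xs : Fin k → Pt n | xs i = x ∧ ∀ j ∈ m, xs j ∈ B}
      = {xs | ∀ l, xs l ∈ (if l = i then {x} else if l ∈ m then B else Set.univ)} := by
    ext xs
    simp only [Set.mem_setOf_eq]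
    constructor
    · rintro ⟨h1, h2⟩ l
      split_ifs with h h'
      · subst h; simp [h1]
      · exact h2 l h'
      · exact Set.mem_univ _
    · intro h
      refine ⟨?_, fun j hj => ?_⟩
      · have := h i; simpa using this
      · have := h j
        rw [if_neg, if_pos hj] at this
        · exact this
        · rintro rfl; exact hi hj
  rw [hset, pi_box, ← Finset.mul_prod_erase Finset.univ _ (Finset.mem_univ i)]
  congr 1
  · rw [if_pos rfl]
  · have h1 : ∀ l ∈ Finset.univ.erase i,
        μ (if l = i then ({x} : Set (Pt n)) else if l ∈ m then B else Set.univ)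
          = (if l ∈ m then μ B else 1) := by
      intro l hl
      rw [if_neg (Finset.ne_of_mem_erase hl)]
      split_ifs
      · rfl
      · exact measure_univ
    rw [Finset.prod_congr rfl h1, Finset.prod_ite_mem]
    have h2 : (Finset.univ.erase i) ∩ m = m := by
      ext l
      simp only [Finset.mem_inter, Finset.mem_erase, Finset.mem_univ, and_true, true_and]
      exact ⟨fun h => h.2, fun h => ⟨fun he => (he ▸ hi) h, h⟩⟩
    rw [h2, Finset.prod_const]

lemma null_atoms (μ : Measure (Pt n)) : μ {v : Pt n | μ {v} = 0} = 0 := by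
  classical
  set Z := {v : Pt n | μ {v} = 0}
  have h2 : μ ↑(Z.toFinite.toFinset) = ∑ x ∈ Z.toFinite.toFinset, μ {x} := (sum_sing μ _).symm
  rw [show Z = ↑(Z.toFinite.toFinset) from (Set.Finite.coe_toFinset _).symm, h2]
  refine Finset.sum_eq_zero fun x hx => ?_
  have hxZ : x ∈ Z := (Set.Finite.mem_toFinset _).mp hx
  exact hxZ

/-- From a real lower bound on the `toReal` of a probability, get an `ENNReal` bound. -/
lemma ofReal_le_meas {μ : Measure (Pt n)} [IsProbabilityMeasure μ] {s : Set (Pt n)} {a : ℝ}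
    (h : a ≤ (μ s).toReal) : ENNReal.ofReal a ≤ μ s := by
  rw [← ENNReal.ofReal_toReal (measure_ne_top μ s)]
  exact ENNReal.ofReal_le_ofReal h

/-- Complement bound. -/
lemma compl_le_ofReal {μ : Measure (Pt n)} [IsProbabilityMeasure μ] {s : Set (Pt n)} {a : ℝ}
    (ha0 : 0 ≤ a) (h : a ≤ (μ s).toReal) : μ sᶜ ≤ ENNReal.ofReal (1 - a) := by
  rw [prob_compl_eq_one_sub (measAll s)]
  calc 1 - μ s ≤ 1 - ENNReal.ofReal a := tsub_le_tsub_left (ofReal_le_meas h) 1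
  _ = ENNReal.ofReal (1 - a) := by
      rw [← ENNReal.ofReal_one, ← ENNReal.ofReal_sub 1 ha0]

/-- Conclusion helper: strict lower bound on the influence. -/
lemma infl_gt {μ : Measure (Pt n)} [IsProbabilityMeasure μ] {f : Pt n → R} {b : R}
    {S : Finset (Fin n)} {ε : ℝ} (hε1 : ε ≤ 1)
    (hlt : ENNReal.ofReal (1 - ε) < μ (Dset f b S)) : infl μ f S b > 1 - ε := by
  rw [infl_eq]
  have := ENNReal.toReal_strict_mono (measure_ne_top μ _) hlt
  rwa [ENNReal.toReal_ofReal (by linarith)] at this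

end KeyAux

namespace KeyNum

lemma one_sub_le_two_rpow {ε : ℝ} (h0 : 0 ≤ ε) (h1 : ε ≤ 1) : 1 - ε ≤ (2:ℝ) ^ (-ε) := by
  have h2 : (2:ℝ) ^ (-ε) = Real.exp (Real.log 2 * (-ε)) := Real.rpow_def_of_pos two_pos _
  have h3 : Real.log 2 * (-ε) + 1 ≤ Real.exp (Real.log 2 * (-ε)) := Real.add_one_le_exp _
  have h4 : Real.log 2 ≤ 1 := by
    have := Real.log_two_lt_d9; linarith
  have h5 : 0 ≤ Real.log 2 := Real.log_nonneg (by norm_num)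
  nlinarith

lemma pow_le_two_rpow {ε : ℝ} (h0 : 0 ≤ ε) (h1 : ε ≤ 1) (m : ℕ) :
    (1 - ε) ^ m ≤ (2:ℝ) ^ (-(ε * m)) := by
  have hb : (0:ℝ) ≤ 1 - ε := by linarith
  calc (1-ε)^m ≤ ((2:ℝ)^(-ε))^m := pow_le_pow_left₀ hb (one_sub_le_two_rpow h0 h1) m
  _ = (2:ℝ)^(-(ε*m)) := by
      rw [← Real.rpow_natCast ((2:ℝ)^(-ε)) m, ← Real.rpow_mul (by norm_num), neg_mul]

lemma two_rpow_le {x y : ℝ} (h : x ≤ y) : (2:ℝ)^(-y) ≤ (2:ℝ)^(-x) :=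
  Real.rpow_le_rpow_of_exponent_le one_le_two (neg_le_neg h)

lemma two_rpow_logb {ε : ℝ} (h0 : 0 < ε) (c : ℕ) :
    (2:ℝ) ^ (-((c:ℝ) * Real.logb 2 (2/ε))) = (ε/2)^c := by
  have hL : (2:ℝ) ^ (Real.logb 2 (2/ε)) = 2/ε :=
    Real.rpow_logb (by norm_num) (by norm_num) (by positivity)
  rw [show -((c:ℝ) * Real.logb 2 (2/ε)) = Real.logb 2 (2/ε) * (-(c:ℝ)) by ring,
    Real.rpow_mul (by norm_num), hL, Real.rpow_neg (by positivity), Real.rpow_natCast,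
    ← inv_pow, inv_div]

lemma mul_pow_le {ε : ℝ} (h0 : 0 < ε) (h1 : ε ≤ 1/2) (m : ℕ) :
    ε * ((m:ℝ) * (1-ε)^m) ≤ 1 := by
  have hε1 : (0:ℝ) < 1 - ε := by linarith
  set a : ℝ := ε / (1-ε) with ha
  have ha0 : 0 ≤ a := by positivity
  have haε : ε ≤ a := by
    rw [ha, le_div_iff₀ hε1]; nlinarith
  have hb : 1 + (m:ℝ) * a ≤ (1+a)^m := one_add_mul_le_pow (by linarith) m
  have h2 : (1-ε)^m * (1+a)^m = 1 := by
    rw [← mul_pow, show (1-ε)*(1+a) = 1 by rw [ha]; field_simp; ring]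
    exact one_pow m
  have h3 : (m:ℝ)*ε ≤ (1+a)^m := by
    have hm0 : (0:ℝ) ≤ (m:ℝ) := Nat.cast_nonneg m
    nlinarith
  have h4 : (0:ℝ) ≤ (1-ε)^m := by positivity
  nlinarith

lemma logb_ge_two {ε : ℝ} (h0 : 0 < ε) (h1 : ε ≤ 1/2) : 2 ≤ Real.logb 2 (2/ε) := by
  have h4 : (4:ℝ) ≤ 2/ε := by rw [le_div_iff₀ h0]; linarith
  have hmono : Real.logb 2 4 ≤ Real.logb 2 (2/ε) :=
    Real.logb_le_logb_of_le one_lt_two (by norm_num) h4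
  have h24 : Real.logb 2 (4:ℝ) = 2 := by
    rw [show (4:ℝ) = 2^(2:ℕ) by norm_num, Real.logb_pow, Real.logb_self_eq_one one_lt_two]
    norm_num
  linarith

lemma numI {ε : ℝ} {k : ℕ} (h0 : 0 < ε) (h1 : ε ≤ 1/2)
    (hk : 100 * (1/ε) * Real.logb 2 (2/ε) ≤ (k:ℝ)) :
    (1 - ε/2)^(k - k/2) + ((k - k/2 : ℕ):ℝ) * (2 * (1-ε)^(k/2)) < ε := by
  set L := Real.logb 2 (2/ε) with hLdef
  have hL2 : 2 ≤ L := logb_ge_two h0 h1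
  have hinv : 2 ≤ 1/ε := by rw [le_div_iff₀ h0]; linarith
  have hk400 : (400:ℝ) ≤ (k:ℝ) := by nlinarith
  have hkN : 400 ≤ k := by exact_mod_cast hk400
  have hεk : 100 * L ≤ ε * k := by
    have := mul_le_mul_of_nonneg_left hk (le_of_lt h0)
    calc 100 * L = ε * (100 * (1/ε) * L) := by field_simp
    _ ≤ ε * k := this
  -- nat arithmetic
  have hnat1 : k/2 ≤ k - k/2 := by omega
  have hnat2 : 2*(k/6) ≤ k/2 := by omega
  have hnat3 : k ≤ 7*(k/6) := by omega
  have hc2 : ((k/2:ℕ):ℝ) ≤ (k:ℝ)/2 := Nat.cast_div_le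
  have hc1 : (k:ℝ)/2 ≤ ((k - k/2:ℕ):ℝ) := by
    have h' : ((k - k/2:ℕ):ℝ) = (k:ℝ) - ((k/2:ℕ):ℝ) := by
      have : k/2 ≤ k := Nat.div_le_self k 2
      exact Nat.cast_sub this
    linarith
  have hck1 : ((k - k/2:ℕ):ℝ) ≤ (k:ℝ) := by
    exact_mod_cast Nat.sub_le k (k/2)
  have hcm : (k:ℝ) ≤ 7*((k/6:ℕ):ℝ) := by exact_mod_cast Nat.cast_le.mpr hnat3
  -- Term A
  have hA : (1 - ε/2)^(k - k/2) ≤ ε/8 := by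
    have s1 : (1 - ε/2)^(k - k/2) ≤ (2:ℝ)^(-(ε/2 * (k - k/2 : ℕ))) :=
      pow_le_two_rpow (by linarith) (by linarith) _
    have s2 : (25:ℝ) * L ≤ ε/2 * ((k - k/2:ℕ):ℝ) := by
      nlinarith [mul_le_mul_of_nonneg_left hc1 (le_of_lt (half_pos h0)), hL2, hεk]
    have s3 : (2:ℝ)^(-(ε/2 * ((k - k/2:ℕ):ℝ))) ≤ (2:ℝ)^(-((25:ℝ)*L)) := two_rpow_le s2
    have s4 : (2:ℝ)^(-((25:ℝ)*L)) = (ε/2)^(25:ℕ) := by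
      have := two_rpow_logb (ε := ε) h0 25
      push_cast at this
      rw [← hLdef] at this
      exact this
    have s5 : ((ε/2):ℝ)^(25:ℕ) ≤ ε/8 := by
      have : (ε/2)^(25:ℕ) = (ε/2) * (ε/2)^(24:ℕ) := by ring
      have h24 : (ε/2)^(24:ℕ) ≤ (1/4:ℝ)^(24:ℕ) := pow_le_pow_left₀ (by linarith) (by linarith) 24
      have h14 : ((1/4:ℝ))^(24:ℕ) ≤ 1/4 := by norm_num
      nlinarith [mul_le_mul_of_nonneg_left (le_trans h24 h14) (le_of_lt (half_pos h0))]
    calc (1 - ε/2)^(k - k/2) ≤ (2:ℝ)^(-(ε/2 * ((k - k/2:ℕ):ℝ))) := s1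
    _ ≤ (2:ℝ)^(-((25:ℝ)*L)) := s3
    _ = (ε/2)^(25:ℕ) := s4
    _ ≤ ε/8 := s5
  -- Term B
  have hB : ((k - k/2 : ℕ):ℝ) * (2 * (1-ε)^(k/2)) ≤ ε/8 := by
    set m := k/6 with hm
    have hp0 : (0:ℝ) ≤ (1-ε)^m := pow_nonneg (by linarith) m
    have hmono : (1-ε)^(k/2) ≤ ((1-ε)^m)^2 := by
      rw [← pow_mul]
      exact pow_le_pow_of_le_one (by linarith) (by linarith) (by omega)
    have hm1 : ε * ((m:ℝ) * (1-ε)^m) ≤ 1 := mul_pow_le h0 h1 m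
    have hpm : (1-ε)^m ≤ (ε/2)^(14:ℕ) := by
      have t1 : (1-ε)^m ≤ (2:ℝ)^(-(ε * m)) := pow_le_two_rpow (by linarith) (by linarith) m
      have t2 : (14:ℝ)*L ≤ ε * m := by
        nlinarith [mul_le_mul_of_nonneg_left hcm (le_of_lt h0), hL2, hεk]
      have t3 := two_rpow_le t2
      have t4 : (2:ℝ)^(-((14:ℝ)*L)) = (ε/2)^(14:ℕ) := by
        have := two_rpow_logb (ε := ε) h0 14
        push_cast at this
        rw [← hLdef] at this
        exact this
      calc (1-ε)^m ≤ (2:ℝ)^(-(ε*(m:ℝ))) := t1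
      _ ≤ (2:ℝ)^(-((14:ℝ)*L)) := t3
      _ = (ε/2)^(14:ℕ) := t4
    have step1 : ((k - k/2 : ℕ):ℝ) * (2 * (1-ε)^(k/2)) ≤ (k:ℝ) * (2*((1-ε)^m)^2) := by
      have hq0 : (0:ℝ) ≤ (1-ε)^(k/2) := pow_nonneg (by linarith) _
      apply mul_le_mul hck1 (by linarith) (by linarith) (Nat.cast_nonneg k)
    have step2 : ε * ((k:ℝ) * (2*((1-ε)^m)^2)) ≤ 14 * (1-ε)^m := by
      have e1 : ε * ((k:ℝ) * (2*((1-ε)^m)^2)) ≤ ε * ((7*(m:ℝ)) * (2*((1-ε)^m)^2)) := by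
        apply mul_le_mul_of_nonneg_left _ (le_of_lt h0)
        apply mul_le_mul_of_nonneg_right hcm (by positivity)
      have e2 : ε * ((7*(m:ℝ)) * (2*((1-ε)^m)^2)) = 14 * (ε * ((m:ℝ)*(1-ε)^m)) * (1-ε)^m := by
        ring
      have e3 : 14 * (ε * ((m:ℝ)*(1-ε)^m)) * (1-ε)^m ≤ 14 * 1 * (1-ε)^m := by
        apply mul_le_mul_of_nonneg_right _ hp0
        linarith
      calc ε * ((k:ℝ) * (2*((1-ε)^m)^2)) ≤ ε * ((7*(m:ℝ)) * (2*((1-ε)^m)^2)) := e1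
      _ = 14 * (ε * ((m:ℝ)*(1-ε)^m)) * (1-ε)^m := e2
      _ ≤ 14 * 1 * (1-ε)^m := e3
      _ = 14 * (1-ε)^m := by ring
    have step3 : (14:ℝ) * (1-ε)^m ≤ 14 * ((ε/2)^2 * (1/4:ℝ)^(12:ℕ)) := by
      have h12 : ((ε/2):ℝ)^(12:ℕ) ≤ (1/4:ℝ)^(12:ℕ) :=
        pow_le_pow_left₀ (by linarith) (by linarith) 12
      have hsplit : ((ε/2):ℝ)^(14:ℕ) = (ε/2)^2 * (ε/2)^(12:ℕ) := by ring
      have : ((ε/2):ℝ)^(14:ℕ) ≤ (ε/2)^2 * (1/4:ℝ)^(12:ℕ) := by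
        rw [hsplit]
        exact mul_le_mul_of_nonneg_left h12 (by positivity)
      linarith [hpm]
    have step4 : (14:ℝ) * ((ε/2)^2 * (1/4:ℝ)^(12:ℕ)) ≤ ε*(ε/8) := by
      have h2 : ((1/4:ℝ))^(12:ℕ) = 1/16777216 := by norm_num
      rw [h2]
      nlinarith [sq_nonneg ε]
    have hεB : ε * (((k - k/2:ℕ):ℝ) * (2*(1-ε)^(k/2))) ≤ ε * (ε/8) := by
      calc ε * (((k - k/2:ℕ):ℝ) * (2*(1-ε)^(k/2)))
          ≤ ε * ((k:ℝ) * (2*((1-ε)^m)^2)) := mul_le_mul_of_nonneg_left step1 h0.le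
      _ ≤ 14 * (1-ε)^m := step2
      _ ≤ 14 * ((ε/2)^2 * (1/4:ℝ)^(12:ℕ)) := step3
      _ ≤ ε*(ε/8) := step4
    exact (mul_le_mul_iff_right₀ h0).mp hεB
  linarith

lemma numII {ε : ℝ} {k : ℕ} (h0 : 0 < ε) (h1 : ε ≤ 1/2)
    (hk : 100 * (1/ε) * Real.logb 2 (2/ε) ≤ (k:ℝ)) :
    (1 - ε)^k < ε * (ε/2) := by
  set L := Real.logb 2 (2/ε) with hLdef
  have hL2 : 2 ≤ L := logb_ge_two h0 h1
  have hεk : 100 * L ≤ ε * k := by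
    have := mul_le_mul_of_nonneg_left hk (le_of_lt h0)
    calc 100 * L = ε * (100 * (1/ε) * L) := by field_simp
    _ ≤ ε * k := this
  have t1 : (1-ε)^k ≤ (2:ℝ)^(-(ε * k)) := pow_le_two_rpow (by linarith) (by linarith) k
  have t2 : (100:ℝ)*L ≤ ε * k := hεk
  have t3 := two_rpow_le t2
  have t4 : (2:ℝ)^(-((100:ℝ)*L)) = (ε/2)^(100:ℕ) := by
    have := two_rpow_logb (ε := ε) h0 100
    push_cast at this
    rw [← hLdef] at this
    exact this
  have t5 : ((ε/2):ℝ)^(100:ℕ) ≤ (ε/2)^(3:ℕ) :=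
    pow_le_pow_of_le_one (by linarith) (by linarith) (by norm_num)
  have t6 : ((ε/2):ℝ)^(3:ℕ) < ε * (ε/2) := by
    have hε2 : 0 < ε^2 := by positivity
    nlinarith
  calc (1-ε)^k ≤ (2:ℝ)^(-(ε*(k:ℝ))) := t1
  _ ≤ (2:ℝ)^(-((100:ℝ)*L)) := t3
  _ = (ε/2)^(100:ℕ) := t4
  _ ≤ (ε/2)^(3:ℕ) := t5
  _ < ε * (ε/2) := t6

end KeyNum


open KeyAux

/-- Key Lemma for Single Round: if Condition I or Condition II holds for `b`,
then a random coalition `S ∼ μ^(k)` biases `f` towards `b` with probability `> 1 - ε`. -/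
theorem key_lemma_single_round :
    ∃ C : ℝ, C > 0 ∧
      ∀ n : ℕ, ∀ μ : Measure (Fin n → Bool), IsProbabilityMeasure μ →
      ∀ (R : Type) (f : (Fin n → Bool) → R) (b : R),
      ∀ ε : ℝ, 0 < ε → ε ≤ 1/2 →
      ∀ k : ℕ, (k : ℝ) ≥ C * (1/ε) * Real.logb 2 (2/ε) →
      -- Condition I
      ((μ {x | (μ {y | f (orv x y) = b}).toReal ≥ 1 - ε}).toReal > ε/2 ∨
      -- Condition II
       (μ {x | (μ {y | f (orv x y) = b}).toReal ≥ ε}).toReal ≥ 1 - ε/2) →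
      ((boost μ k) {x | infl μ f (supp x) b > 1 - ε}).toReal > 1 - ε := by
  classical
  refine ⟨100, by norm_num, ?_⟩
  intro n μ hμ R f b ε hε0 hε2 k hk hcond
  haveI : IsProbabilityMeasure μ := hμ
  have hk' : 100 * (1/ε) * Real.logb 2 (2/ε) ≤ (k:ℝ) := hk
  have hL2 : 2 ≤ Real.logb 2 (2/ε) := KeyNum.logb_ge_two hε0 hε2
  have hinv : 2 ≤ 1/ε := by rw [le_div_iff₀ hε0]; linarith
  have hk400R : (400:ℝ) ≤ (k:ℝ) := by nlinarith
  have hk400 : 400 ≤ k := by exact_mod_cast hk400R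
  set G : Set (Pt n) := {x | infl μ f (supp x) b > 1 - ε} with hG
  set π := (Measure.pi fun _ : Fin k => μ) with hπ
  haveI : IsProbabilityMeasure π := by rw [hπ]; infer_instance
  have hmap : (boost μ k) G = π ((fun xs => Phi xs) ⁻¹' G) :=
    Measure.map_apply (measurable_of_countable _) (measAll _)
  rw [hmap]
  set Pre := (fun xs : Fin k → Pt n => Phi xs) ⁻¹' G with hPre
  suffices hsuff : π (Preᶜ) < ENNReal.ofReal ε by
    have hle1 : π Preᶜ ≤ 1 := prob_le_one
    have h2 : π (Preᶜᶜ) = 1 - π (Preᶜ) := prob_compl_eq_one_sub (measAll _)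
    rw [compl_compl] at h2
    rw [h2, ENNReal.toReal_sub_of_le hle1 ENNReal.one_ne_top]
    have h3 := ENNReal.toReal_lt_of_lt_ofReal hsuff
    simp only [ENNReal.toReal_one]
    linarith
  have hmemG : ∀ xs : Fin k → Pt n,
      ENNReal.ofReal (1-ε) < μ (Dset f b (supp (Phi xs))) → xs ∈ Pre := by
    intro xs hlt
    show Phi xs ∈ G
    exact infl_gt (by linarith) hlt
  have hmemG' : ∀ xs : Fin k → Pt n,
      μ ((Dset f b (supp (Phi xs)))ᶜ) < ENNReal.ofReal ε → xs ∈ Pre := by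
    intro xs hlt
    apply hmemG
    have hD : μ (Dset f b (supp (Phi xs))) = 1 - μ ((Dset f b (supp (Phi xs)))ᶜ) := by
      have h2 := prob_compl_eq_one_sub (μ := μ) (measAll ((Dset f b (supp (Phi xs)))ᶜ))
      rwa [compl_compl] at h2
    rw [hD]
    have hr : (μ ((Dset f b (supp (Phi xs)))ᶜ)).toReal < ε :=
      ENNReal.toReal_lt_of_lt_ofReal hlt
    have hfin : μ ((Dset f b (supp (Phi xs)))ᶜ) ≠ ⊤ := measure_ne_top _ _
    have hle1 : μ ((Dset f b (supp (Phi xs)))ᶜ) ≤ 1 := prob_le_one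
    -- ofReal (1-ε) < 1 - a
    rw [show μ ((Dset f b (supp (Phi xs)))ᶜ) = ENNReal.ofReal ((μ ((Dset f b (supp (Phi xs)))ᶜ)).toReal) from (ENNReal.ofReal_toReal hfin).symm]
    rw [show (1:ℝ≥0∞) = ENNReal.ofReal 1 from ENNReal.ofReal_one.symm]
    rw [← ENNReal.ofReal_sub 1 ENNReal.toReal_nonneg]
    exact (ENNReal.ofReal_lt_ofReal_iff (by linarith)).mpr (by linarith)
  rcases hcond with hI | hII
  · -- Condition I
    set A1 : Set (Pt n) := {x | (μ (Wset f b x)).toReal ≥ 1 - ε} with hA1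
    have hIA1 : (μ A1).toReal > ε/2 := hI
    set k2 := k / 2 with hk2def
    set k1 := k - k2 with hk1def
    have hk1lt : k1 < k := by omega
    set H1 : Finset (Fin k) := Finset.univ.filter (fun i => (i:ℕ) < k1) with hH1
    set H2 : Finset (Fin k) := Finset.univ.filter (fun i => ¬ ((i:ℕ) < k1)) with hH2
    have hcard1 : H1.card = k1 := by
      rw [hH1, show Finset.univ.filter (fun i : Fin k => (i:ℕ) < k1)
          = Finset.Iio (⟨k1, hk1lt⟩ : Fin k) by ext i; simp [Fin.lt_def], Fin.card_Iio]
    have hcard12 : H1.card + H2.card = k := by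
      rw [hH1, hH2, Finset.card_filter_add_card_filter_not]
      simp
    have hcard2 : H2.card = k2 := by omega
    set A1' : Set (Pt n) :=
      {x | x ∈ A1 ∧ μ (Wset f b x) ≤ ENNReal.ofReal (1-ε)} with hA1'
    set E0 : Set (Fin k → Pt n) := {xs | ∀ i ∈ H1, xs i ∈ A1ᶜ} with hE0
    set E2 : Fin k → Set (Fin k → Pt n) := fun i =>
      {xs | xs i ∈ A1' ∧ ((∀ j ∈ H2, xs j ∈ Wset f b (xs i))
        ∨ (∀ j ∈ H2, xs j ∈ (Wset f b (xs i))ᶜ))} with hE2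
    set N : Set (Fin k → Pt n) := {xs | ∃ j, μ {xs j} = 0} with hN
    have hdet : ∀ xs, xs ∉ E0 → xs ∉ N → (∀ i ∈ H1, xs ∉ E2 i) → xs ∈ Pre := by
      intro xs hxs0 hxsN hxs2
      have hex : ∃ i ∈ H1, xs i ∈ A1 := by
        by_contra hno
        push_neg at hno
        exact hxs0 (fun i hi => hno i hi)
      obtain ⟨i, hiH1, hiA1⟩ := hex
      have hWD : Wset f b (xs i) ⊆ Dset f b (supp (Phi xs)) :=
        wset_subset_dset f b xs i
      have hge : ENNReal.ofReal (1-ε) ≤ μ (Wset f b (xs i)) :=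
        ofReal_le_meas hiA1
      by_cases hc : μ (Wset f b (xs i)) ≤ ENNReal.ofReal (1-ε)
      · have hxA1' : xs i ∈ A1' := ⟨hiA1, hc⟩
        have hno : ¬ ((∀ j ∈ H2, xs j ∈ Wset f b (xs i))
            ∨ (∀ j ∈ H2, xs j ∈ (Wset f b (xs i))ᶜ)) :=
          fun h => hxs2 i hiH1 ⟨hxA1', h⟩
        push_neg at hno
        obtain ⟨h1, h2⟩ := hno
        obtain ⟨jout, hjoutH2, hjout⟩ := h1
        obtain ⟨jin, hjinH2, hjin⟩ := h2
        have hjin' : xs jin ∈ Wset f b (xs i) := by simpa using hjin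
        have hatom : μ {xs jout} ≠ 0 := fun h0 => hxsN ⟨jout, h0⟩
        have hsing : xs jout ∈ Dset f b (supp (Phi xs)) :=
          single_mem_dset f b xs i jin jout hjin'
        apply hmemG
        calc ENNReal.ofReal (1-ε)
            < ENNReal.ofReal (1-ε) + μ {xs jout} :=
              ENNReal.lt_add_right ENNReal.ofReal_ne_top hatom
        _ ≤ μ (Wset f b (xs i)) + μ {xs jout} := add_le_add_left hge _
        _ = μ (Wset f b (xs i) ∪ {xs jout}) :=
            (measure_union (Set.disjoint_singleton_right.mpr hjout) (measAll _)).symm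
        _ ≤ μ (Dset f b (supp (Phi xs))) := by
            apply measure_mono
            rw [Set.union_subset_iff]
            exact ⟨hWD, Set.singleton_subset_iff.mpr hsing⟩
      · push_neg at hc
        apply hmemG
        exact lt_of_lt_of_le hc (measure_mono hWD)
    have hE0bound : π E0 ≤ ENNReal.ofReal ((1 - ε/2)^k1) := by
      rw [hE0, hπ, box1 μ H1 A1ᶜ, hcard1]
      have h3 : μ A1ᶜ ≤ ENNReal.ofReal (1 - ε/2) :=
        compl_le_ofReal (by linarith) (le_of_lt hIA1)
      calc μ A1ᶜ ^ k1 ≤ (ENNReal.ofReal (1 - ε/2))^k1 := pow_le_pow_left₀ zero_le h3 k1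
      _ = ENNReal.ofReal ((1 - ε/2)^k1) := (ENNReal.ofReal_pow (by linarith) k1).symm
    have hE2bound : ∀ i ∈ H1, π (E2 i) ≤ ENNReal.ofReal (2 * (1-ε)^k2) := by
      intro i hiH1
      have hiH2 : i ∉ H2 := by
        rw [hH1] at hiH1
        rw [hH2]
        simp only [Finset.mem_filter, Finset.mem_univ, true_and] at hiH1 ⊢
        exact not_not_intro hiH1
      set T : Finset (Pt n) := A1'.toFinite.toFinset with hT
      set Box : Pt n → Set (Fin k → Pt n) := fun x =>
        ({xs : Fin k → Pt n | xs i = x ∧ ∀ j ∈ H2, xs j ∈ Wset f b x}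
          ∪ {xs : Fin k → Pt n | xs i = x ∧ ∀ j ∈ H2, xs j ∈ (Wset f b x)ᶜ}) with hBox
      have hcover : E2 i ⊆ ⋃ x ∈ T, Box x := by
        intro xs hxs
        apply Set.mem_biUnion ((A1'.toFinite.mem_toFinset).mpr hxs.1)
        rw [hBox]
        rcases hxs.2 with h | h
        · exact Or.inl ⟨rfl, h⟩
        · exact Or.inr ⟨rfl, h⟩
      have hperx : ∀ x ∈ T, π (Box x) ≤ μ {x} * ENNReal.ofReal (2 * (1-ε)^k2) := by
        intro x hxT
        have hxA : x ∈ A1' := (A1'.toFinite.mem_toFinset).mp hxT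
        have hb1 : μ (Wset f b x) ≤ ENNReal.ofReal (1-ε) := hxA.2
        have hb2 : μ ((Wset f b x)ᶜ) ≤ ENNReal.ofReal (1-ε) := by
          have h4 : μ ((Wset f b x)ᶜ) ≤ ENNReal.ofReal (1 - (1-ε)) :=
            compl_le_ofReal (by linarith) hxA.1
          calc μ ((Wset f b x)ᶜ) ≤ ENNReal.ofReal (1 - (1-ε)) := h4
          _ ≤ ENNReal.ofReal (1-ε) := ENNReal.ofReal_le_ofReal (by linarith)
        have hu1 : π {xs : Fin k → Pt n | xs i = x ∧ ∀ j ∈ H2, xs j ∈ Wset f b x}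
            = μ {x} * μ (Wset f b x) ^ H2.card := by
          rw [hπ]; exact box2 μ H2 hiH2 x (Wset f b x)
        have hu2 : π {xs : Fin k → Pt n | xs i = x ∧ ∀ j ∈ H2, xs j ∈ (Wset f b x)ᶜ}
            = μ {x} * μ ((Wset f b x)ᶜ) ^ H2.card := by
          rw [hπ]; exact box2 μ H2 hiH2 x ((Wset f b x)ᶜ)
        have hsum : π (Box x) ≤ μ {x} * μ (Wset f b x) ^ H2.card
            + μ {x} * μ ((Wset f b x)ᶜ) ^ H2.card := by
          rw [hBox, ← hu1, ← hu2]
          exact measure_union_le _ _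
        have hbnd : μ {x} * μ (Wset f b x) ^ H2.card + μ {x} * μ ((Wset f b x)ᶜ) ^ H2.card
            ≤ μ {x} * (ENNReal.ofReal (1-ε)) ^ k2 + μ {x} * (ENNReal.ofReal (1-ε)) ^ k2 := by
          rw [hcard2]
          exact add_le_add (mul_le_mul_right (pow_le_pow_left₀ zero_le hb1 k2) _)
            (mul_le_mul_right (pow_le_pow_left₀ zero_le hb2 k2) _)
        have hfin : μ {x} * (ENNReal.ofReal (1-ε)) ^ k2 + μ {x} * (ENNReal.ofReal (1-ε)) ^ k2
            = μ {x} * ENNReal.ofReal (2 * (1-ε)^k2) := by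
          rw [show (2:ℝ) * (1-ε)^k2 = (1-ε)^k2 + (1-ε)^k2 by ring]
          rw [ENNReal.ofReal_add (pow_nonneg (by linarith) k2) (pow_nonneg (by linarith) k2)]
          rw [← ENNReal.ofReal_pow (by linarith : (0:ℝ) ≤ 1-ε) k2]
          ring
        exact le_trans hsum (le_trans hbnd (le_of_eq hfin))
      have hstep1 : π (E2 i) ≤ ∑ x ∈ T, π (Box x) :=
        le_trans (measure_mono hcover) (measure_biUnion_finset_le T _)
      have hstep2 : ∑ x ∈ T, π (Box x) ≤ ∑ x ∈ T, μ {x} * ENNReal.ofReal (2 * (1-ε)^k2) :=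
        Finset.sum_le_sum hperx
      have hstep3 : ∑ x ∈ T, μ {x} * ENNReal.ofReal (2 * (1-ε)^k2)
          = (∑ x ∈ T, μ {x}) * ENNReal.ofReal (2 * (1-ε)^k2) := by
        rw [Finset.sum_mul]
      have hstep4 : (∑ x ∈ T, μ {x}) * ENNReal.ofReal (2 * (1-ε)^k2)
          ≤ 1 * ENNReal.ofReal (2 * (1-ε)^k2) :=
        mul_le_mul_left (sum_sing_le_one μ T) _
      calc π (E2 i) ≤ ∑ x ∈ T, π (Box x) := hstep1
      _ ≤ ∑ x ∈ T, μ {x} * ENNReal.ofReal (2 * (1-ε)^k2) := hstep2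
      _ = (∑ x ∈ T, μ {x}) * ENNReal.ofReal (2 * (1-ε)^k2) := hstep3
      _ ≤ 1 * ENNReal.ofReal (2 * (1-ε)^k2) := hstep4
      _ = ENNReal.ofReal (2 * (1-ε)^k2) := one_mul _
    have hNbound : π N ≤ 0 := by
      set ZB : Fin k → Set (Fin k → Pt n) := fun j =>
        {xs : Fin k → Pt n | ∀ l ∈ ({j} : Finset (Fin k)), xs l ∈ {v : Pt n | μ {v} = 0}}
        with hZB
      have hsub : N ⊆ ⋃ j ∈ (Finset.univ : Finset (Fin k)), ZB j := by
        rintro xs ⟨j, hj⟩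
        apply Set.mem_biUnion (Finset.mem_univ j)
        rw [hZB]
        intro l hl
        rw [Finset.mem_singleton] at hl
        subst hl; exact hj
      have hval : ∀ j : Fin k, π (ZB j) = 0 := by
        intro j
        rw [hZB, hπ, box1 μ ({j} : Finset (Fin k)) {v : Pt n | μ {v} = 0}]
        rw [null_atoms μ]
        simp
      have h1 : π N ≤ ∑ j ∈ (Finset.univ : Finset (Fin k)), π (ZB j) :=
        le_trans (measure_mono hsub) (measure_biUnion_finset_le _ _)
      have h2 : ∑ j ∈ (Finset.univ : Finset (Fin k)), π (ZB j) = 0 :=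
        Finset.sum_eq_zero fun j _ => hval j
      rw [h2] at h1
      exact h1
    have hsubBad : Preᶜ ⊆ E0 ∪ ((⋃ i ∈ H1, E2 i) ∪ N) := by
      intro xs hxs
      by_contra hnot
      have h0 : xs ∉ E0 := fun h => hnot (Or.inl h)
      have hU : xs ∉ ⋃ i ∈ H1, E2 i := fun h => hnot (Or.inr (Or.inl h))
      have hNx : xs ∉ N := fun h => hnot (Or.inr (Or.inr h))
      have hE2x : ∀ i ∈ H1, xs ∉ E2 i := fun i hi hmem => hU (Set.mem_biUnion hi hmem)
      exact hxs (hdet xs h0 hNx hE2x)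
    have hUbound : π (⋃ i ∈ H1, E2 i) ≤ ENNReal.ofReal ((k1:ℝ) * (2 * (1-ε)^k2)) := by
      calc π (⋃ i ∈ H1, E2 i) ≤ ∑ i ∈ H1, π (E2 i) := measure_biUnion_finset_le _ _
      _ ≤ ∑ _i ∈ H1, ENNReal.ofReal (2 * (1-ε)^k2) := Finset.sum_le_sum hE2bound
      _ = H1.card • ENNReal.ofReal (2 * (1-ε)^k2) := Finset.sum_const _
      _ = (k1 : ℝ≥0∞) * ENNReal.ofReal (2 * (1-ε)^k2) := by rw [hcard1, nsmul_eq_mul]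
      _ = ENNReal.ofReal ((k1:ℝ)) * ENNReal.ofReal (2 * (1-ε)^k2) := by
          rw [ENNReal.ofReal_natCast]
      _ = ENNReal.ofReal ((k1:ℝ) * (2 * (1-ε)^k2)) :=
          (ENNReal.ofReal_mul (Nat.cast_nonneg k1)).symm
    have htot : π Preᶜ ≤ ENNReal.ofReal ((1-ε/2)^k1 + (k1:ℝ) * (2 * (1-ε)^k2)) := by
      calc π Preᶜ ≤ π (E0 ∪ ((⋃ i ∈ H1, E2 i) ∪ N)) := measure_mono hsubBad
      _ ≤ π E0 + π ((⋃ i ∈ H1, E2 i) ∪ N) := measure_union_le _ _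
      _ ≤ π E0 + (π (⋃ i ∈ H1, E2 i) + π N) := add_le_add_right (measure_union_le _ _) _
      _ ≤ ENNReal.ofReal ((1-ε/2)^k1) + (ENNReal.ofReal ((k1:ℝ) * (2 * (1-ε)^k2)) + 0) :=
          add_le_add hE0bound (add_le_add hUbound hNbound)
      _ = ENNReal.ofReal ((1-ε/2)^k1) + ENNReal.ofReal ((k1:ℝ) * (2 * (1-ε)^k2)) := by
          rw [add_zero]
      _ = ENNReal.ofReal ((1-ε/2)^k1 + (k1:ℝ) * (2 * (1-ε)^k2)) := by
          rw [← ENNReal.ofReal_add (pow_nonneg (by linarith) k1)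
            (mul_nonneg (Nat.cast_nonneg k1)
              (mul_nonneg (by norm_num) (pow_nonneg (by linarith) k2)))]
    refine lt_of_le_of_lt htot ?_
    have hnum := KeyNum.numI hε0 hε2 hk'
    exact (ENNReal.ofReal_lt_ofReal_iff hε0).mpr hnum
  · -- Condition II
    set A2 : Set (Pt n) := {x | (μ (Wset f b x)).toReal ≥ ε} with hA2
    have hIIA2 : (μ A2).toReal ≥ 1 - ε/2 := hII
    have hA2c : μ A2ᶜ ≤ ENNReal.ofReal (ε/2) := by
      have h5 := compl_le_ofReal (μ := μ) (s := A2) (by linarith) hIIA2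
      calc μ A2ᶜ ≤ ENNReal.ofReal (1 - (1 - ε/2)) := h5
      _ = ENNReal.ofReal (ε/2) := by norm_num
    set Ys : (Fin k → Pt n) → Set (Pt n) := fun xs =>
      {z | z ∈ A2 ∧ ∀ j : Fin k, xs j ∈ (Wset f b z)ᶜ} with hYs
    have hdet2 : ∀ xs, μ (Ys xs) < ENNReal.ofReal (ε/2) → xs ∈ Pre := by
      intro xs hY
      apply hmemG'
      have hsub : (Dset f b (supp (Phi xs)))ᶜ ⊆ A2ᶜ ∪ Ys xs := by
        intro z hz
        by_cases hzA : z ∈ A2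
        · right
          refine ⟨hzA, fun j => ?_⟩
          intro hmem
          apply hz
          apply wset_subset_dset f b xs j
          have hco : orv (xs j) z = orv z (xs j) := by
            funext l; simp [orv, Bool.or_comm]
          show f (orv (xs j) z) = b
          rw [hco]
          exact hmem
        · left; exact hzA
      calc μ ((Dset f b (supp (Phi xs)))ᶜ) ≤ μ (A2ᶜ ∪ Ys xs) := measure_mono hsub
      _ ≤ μ A2ᶜ + μ (Ys xs) := measure_union_le _ _
      _ ≤ ENNReal.ofReal (ε/2) + μ (Ys xs) := add_le_add_left hA2c _
      _ < ENNReal.ofReal (ε/2) + ENNReal.ofReal (ε/2) :=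
          ENNReal.add_lt_add_left ENNReal.ofReal_ne_top hY
      _ = ENNReal.ofReal ε := by
          rw [← ENNReal.ofReal_add (by linarith) (by linarith)]
          norm_num
    have hint : ∫⁻ xs, μ (Ys xs) ∂π ≤ ENNReal.ofReal ((1-ε)^k) := by
      have hrepr : (fun xs : Fin k → Pt n => μ (Ys xs))
          = fun xs => ∑ z ∈ (Finset.univ : Finset (Pt n)),
              (if z ∈ Ys xs then μ {z} else 0) := by
        funext xs
        have h1 : ∑ z ∈ (Finset.univ : Finset (Pt n)), (if z ∈ Ys xs then μ {z} else 0)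
            = ∑ z ∈ Finset.univ.filter (fun z => z ∈ Ys xs), μ {z} :=
          (Finset.sum_filter _ _).symm
        rw [h1, sum_sing μ]
        congr 1
        ext z
        simp
      rw [hrepr, lintegral_finset_sum _ (fun z _ => measurable_of_countable _)]
      have hperz : ∀ z : Pt n,
          ∫⁻ xs, (if z ∈ Ys xs then μ {z} else 0) ∂π ≤ μ {z} * ENNReal.ofReal ((1-ε)^k) := by
        intro z
        have hind : (fun xs : Fin k → Pt n => if z ∈ Ys xs then μ {z} else 0)
            = Set.indicator {xs : Fin k → Pt n | z ∈ Ys xs} (fun _ => μ {z}) := by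
          funext xs
          rw [Set.indicator_apply]
          by_cases h : z ∈ Ys xs
          · rw [if_pos h, if_pos (show xs ∈ {xs : Fin k → Pt n | z ∈ Ys xs} from h)]
          · rw [if_neg h, if_neg (show xs ∉ {xs : Fin k → Pt n | z ∈ Ys xs} from h)]
        rw [hind, lintegral_indicator_const (measAll _)]
        by_cases hzA : z ∈ A2
        · have hbox : {xs : Fin k → Pt n | z ∈ Ys xs}
              = {xs : Fin k → Pt n | ∀ j ∈ (Finset.univ : Finset (Fin k)),
                  xs j ∈ (Wset f b z)ᶜ} := by
            ext xs
            simp only [hYs, Set.mem_setOf_eq, Finset.mem_univ, true_implies]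
            constructor
            · intro h j hmem
              exact h.2 j hmem
            · intro h
              exact ⟨hzA, fun j => h j⟩
          rw [hbox, hπ, box1 μ Finset.univ ((Wset f b z)ᶜ), Finset.card_univ, Fintype.card_fin]
          have hWz : μ ((Wset f b z)ᶜ) ≤ ENNReal.ofReal (1-ε) :=
            compl_le_ofReal (le_of_lt hε0) hzA
          refine mul_le_mul_right ?_ _
          calc μ ((Wset f b z)ᶜ)^k ≤ (ENNReal.ofReal (1-ε))^k :=
              pow_le_pow_left₀ zero_le hWz k
          _ = ENNReal.ofReal ((1-ε)^k) := (ENNReal.ofReal_pow (by linarith) k).symm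
        · have hempty : {xs : Fin k → Pt n | z ∈ Ys xs} = ∅ := by
            ext xs
            simp only [hYs, Set.mem_setOf_eq, Set.mem_empty_iff_false, iff_false]
            intro h
            exact hzA h.1
          rw [hempty, measure_empty, mul_zero]
          exact zero_le
      calc ∑ z ∈ (Finset.univ : Finset (Pt n)), ∫⁻ xs, (if z ∈ Ys xs then μ {z} else 0) ∂π
          ≤ ∑ z ∈ (Finset.univ : Finset (Pt n)), μ {z} * ENNReal.ofReal ((1-ε)^k) :=
          Finset.sum_le_sum (fun z _ => hperz z)
      _ = (∑ z ∈ (Finset.univ : Finset (Pt n)), μ {z}) * ENNReal.ofReal ((1-ε)^k) := by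
          rw [Finset.sum_mul]
      _ ≤ 1 * ENNReal.ofReal ((1-ε)^k) := mul_le_mul_left (sum_sing_le_one μ _) _
      _ = ENNReal.ofReal ((1-ε)^k) := one_mul _
    have hmarkov := mul_meas_ge_le_lintegral₀ (μ := π)
      (f := fun xs => μ (Ys xs)) ((measurable_of_countable _).aemeasurable)
      (ENNReal.ofReal (ε/2))
    have hBadlt : π {xs | ENNReal.ofReal (ε/2) ≤ μ (Ys xs)} < ENNReal.ofReal ε := by
      by_contra hcon
      push_neg at hcon
      have h1 : ENNReal.ofReal (ε/2) * ENNReal.ofReal ε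
          ≤ ENNReal.ofReal (ε/2) * π {xs | ENNReal.ofReal (ε/2) ≤ μ (Ys xs)} :=
        mul_le_mul_right hcon _
      have h2 : ENNReal.ofReal (ε/2) * π {xs | ENNReal.ofReal (ε/2) ≤ μ (Ys xs)}
          ≤ ENNReal.ofReal ((1-ε)^k) := le_trans hmarkov hint
      have h3 : ENNReal.ofReal ((1-ε)^k) < ENNReal.ofReal (ε/2) * ENNReal.ofReal ε := by
        rw [← ENNReal.ofReal_mul (by linarith)]
        apply (ENNReal.ofReal_lt_ofReal_iff (by positivity)).mpr
        have hnum := KeyNum.numII hε0 hε2 hk'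
        rw [mul_comm] at hnum
        exact hnum
      exact absurd (le_trans h1 h2) (not_le.mpr h3)
    have hPreBad : Preᶜ ⊆ {xs | ENNReal.ofReal (ε/2) ≤ μ (Ys xs)} := by
      intro xs hxs
      by_contra hnotBad
      exact hxs (hdet2 xs (not_le.mp hnotBad))
    exact lt_of_le_of_lt (measure_mono hPreBad) hBadlt
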